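/- Let R → S be a faithfully flat finite ring map of commutative Noetherian rings. Then the map R → S is a split injection of R-modules; more generally, for every R-module M the natural map M → M ⊗_R S is a split monomorphism of R-modules. -/

import Mathlib

universe u v

open scoped TensorProduct

open IsLocalRing in
set_option maxHeartbeats 1000000 in
private theorem key_split (R S : Type u) [CommRing R] [CommRing S] [IsNoetherianRing R]
    [Algebra R S] [Module.Finite R S] [Module.FaithfullyFlat R S] :
    ∃ r : S →ₗ[R] R, r 1 = 1 := by
  haveI : Module.FinitePresentation R S := Module.finitePresentation_of_finite R S
  let ψ : (S →ₗ[R] R) →ₗ[R] R := LinearMap.applyₗ (1 : S)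
  suffices h1 : (1 : R) ∈ LinearMap.range ψ by
    obtain ⟨r, hr⟩ := h1
    exact ⟨r, hr⟩
  refine Submodule.mem_of_localization_maximal
    (Mₚ := fun P _ => Localization.AtPrime P)
    (f := fun P _ => Algebra.linearMap R (Localization.AtPrime P)) _ _ (fun P hP => ?_)
  -- local situation
  set Rₚ := Localization.AtPrime P
  haveI : IsNoetherianRing Rₚ :=
    IsLocalization.isNoetherianRing P.primeCompl Rₚ inferInstance
  haveI : Module.FinitePresentation Rₚ (Rₚ ⊗[R] S) :=
    Module.finitePresentation_of_finite Rₚ _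
  haveI : Module.Free Rₚ (Rₚ ⊗[R] S) := Module.free_of_flat_of_isLocalRing
  set k := ResidueField Rₚ
  haveI : Nontrivial (k ⊗[R] S) := Module.FaithfullyFlat.rTensor_nontrivial R S k
  -- injectivity after tensoring with the residue field
  have hinj : Function.Injective
      ((Algebra.linearMap Rₚ (Rₚ ⊗[R] S)).lTensor k) := by
    have hc : Function.Injective (algebraMap k (k ⊗[R] S)) :=
      (algebraMap k (k ⊗[R] S)).injective
    intro x y hxy
    have hx : x = (TensorProduct.rid Rₚ k).symm ((TensorProduct.rid Rₚ k) x) := by simp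
    have hy : y = (TensorProduct.rid Rₚ k).symm ((TensorProduct.rid Rₚ k) y) := by simp
    rw [hx, hy]
    congr 1
    set a := (TensorProduct.rid Rₚ k) x
    set b := (TensorProduct.rid Rₚ k) y
    have hax : x = a ⊗ₜ[Rₚ] (1 : Rₚ) := by rw [hx]; rfl
    have hby : y = b ⊗ₜ[Rₚ] (1 : Rₚ) := by rw [hy]; rfl
    rw [hax, hby] at hxy
    let e1 := TensorProduct.AlgebraTensorModule.cancelBaseChange R Rₚ k k S
    have ha : ∀ c : k, e1 (c ⊗ₜ[Rₚ] (1 : Rₚ ⊗[R] S)) = algebraMap k (k ⊗[R] S) c := by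
      intro c
      rw [Algebra.TensorProduct.one_def]
      rw [show (algebraMap k (k ⊗[R] S)) c = c ⊗ₜ[R] (1 : S) from rfl]
      rw [show (c ⊗ₜ[Rₚ] ((1:Rₚ) ⊗ₜ[R] (1:S)) : k ⊗[Rₚ] (Rₚ ⊗[R] S))
        = c ⊗ₜ[Rₚ] ((1:Rₚ) ⊗ₜ[R] (1:S)) from rfl]
      rw [TensorProduct.AlgebraTensorModule.cancelBaseChange_tmul, one_smul]
    have h2 : e1 (a ⊗ₜ[Rₚ] (1 : Rₚ ⊗[R] S)) = e1 (b ⊗ₜ[Rₚ] (1 : Rₚ ⊗[R] S)) := by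
      simp only [LinearMap.lTensor_tmul, Algebra.linearMap_apply, map_one] at hxy
      rw [hxy]
    rw [ha, ha] at h2
    exact hc h2
  obtain ⟨l', hl'⟩ :=
    (IsLocalRing.split_injective_iff_lTensor_residueField_injective
      (Algebra.linearMap Rₚ (Rₚ ⊗[R] S))).mpr hinj
  -- pull the local retraction back
  let gP : S →ₗ[R] Rₚ ⊗[R] S := TensorProduct.mk R Rₚ S 1
  haveI : IsLocalizedModule P.primeCompl gP :=
    (isLocalizedModule_iff_isBaseChange P.primeCompl Rₚ gP).mpr
      (TensorProduct.isBaseChange R S Rₚ)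
  let Φ := IsLocalizedModule.mapExtendScalars P.primeCompl gP
    (Algebra.linearMap R Rₚ) Rₚ
  obtain ⟨⟨φ, s⟩, hφ⟩ := IsLocalizedModule.surj P.primeCompl Φ l'
  have h1T : l' 1 = 1 := by
    have := LinearMap.congr_fun hl' 1
    simp at this
    rw [Algebra.TensorProduct.one_def]
    exact this
  have heval : algebraMap R Rₚ (φ 1) = algebraMap R Rₚ s := by
    have := LinearMap.congr_fun hφ (gP 1)
    simp only [LinearMap.smul_apply, Φ, IsLocalizedModule.mapExtendScalars_apply_apply,
      IsLocalizedModule.map_apply, Algebra.linearMap_apply] at this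
    have hg1 : gP 1 = (1 : Rₚ ⊗[R] S) := by
      simp [gP, Algebra.TensorProduct.one_def]
    rw [hg1, h1T] at this
    rw [← this, Submonoid.smul_def, Algebra.smul_def, mul_one]
  rw [Submodule.mem_localized₀]
  refine ⟨φ 1, ⟨φ, rfl⟩, s, ?_⟩
  rw [IsLocalizedModule.mk'_eq_iff]
  simp only [Algebra.linearMap_apply, map_one]
  rw [heval, Submonoid.smul_def, Algebra.smul_def, mul_one]

/-- For a faithfully flat finite map `R → S` of commutative Noetherian rings, `R → S`
is a split injection of `R`-modules, and more generally for every `R`-module `M` the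
natural map `M → M ⊗[R] S`, `m ↦ m ⊗ 1`, is a split monomorphism of `R`-modules. -/
theorem stmt7 (R S : Type u) [CommRing R] [CommRing S] [IsNoetherianRing R]
    [IsNoetherianRing S] [Algebra R S] [Module.Finite R S] [Module.FaithfullyFlat R S] :
    (∃ r : S →ₗ[R] R, r ∘ₗ Algebra.linearMap R S = LinearMap.id) ∧
    ∀ (M : Type v) [AddCommGroup M] [Module R M],
      ∃ r : (M ⊗[R] S) →ₗ[R] M,
        r ∘ₗ ((TensorProduct.mk R M S).flip (1 : S)) = LinearMap.id := by
  obtain ⟨r, hr⟩ := key_split R S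
  constructor
  · refine ⟨r, ?_⟩
    apply LinearMap.ext_ring
    simp [hr]
  · intro M _ _
    refine ⟨(TensorProduct.rid R M).toLinearMap ∘ₗ LinearMap.lTensor M r, ?_⟩
    ext m
    simp [hr]
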